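/- arXiv:1608.07170 — 2 statements merged into one kernel-verified Lean document; each statement's English description precedes it below -/
import Mathlib

section
/- Let K ⊆ ℝⁿ be a pointed closed convex cone and x ∈ K. Then x can be written as a sum of at most ℓ_F(x) − 1 elements each belonging to an extreme ray of K, where ℓ_F(x) is the length of the longest chain of nonempty faces of the minimal face of K containing x. -/
/-- The dimension of a set: the linear dimension of its affine hull. -/
noncomputable def setDim {E : Type*} [AddCommGroup E] [Module ℝ E] (S : Set E) : ℕ :=
  Module.finrank ℝ (vectorSpan ℝ S)

/-- `F` is a face of the convex set `S`: a convex subset such that whenever a point of the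
open segment between `x, y ∈ S` lies in `F`, both endpoints lie in `F`. -/
def IsFaceOf {E : Type*} [AddCommGroup E] [Module ℝ E] (S F : Set E) : Prop :=
  F ⊆ S ∧ Convex ℝ F ∧ ∀ ⦃x⦄, x ∈ S → ∀ ⦃y⦄, y ∈ S → ∀ ⦃a : ℝ⦄, 0 < a → a < 1 →
    a • x + (1 - a) • y ∈ F → x ∈ F ∧ y ∈ F

/-- An extreme ray of `K` is a one-dimensional face. -/
def IsExtremeRay {E : Type*} [AddCommGroup E] [Module ℝ E] (K R : Set E) : Prop :=
  IsFaceOf K R ∧ setDim R = 1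

/-- `x` is a sum of at most `k` elements, each belonging to an extreme ray of `K`. -/
def IsSumOfExtremeRayElems {E : Type*} [AddCommGroup E] [Module ℝ E]
    (K : Set E) (k : ℕ) (x : E) : Prop :=
  ∃ m : ℕ, m ≤ k ∧ ∃ f : Fin m → E,
    (∀ i, ∃ R : Set E, IsExtremeRay K R ∧ f i ∈ R) ∧ x = ∑ i, f i

/-- There is a chain of `l` nonempty faces of `S`, each properly containing the next. -/
def HasFaceChainOfLength {E : Type*} [AddCommGroup E] [Module ℝ E] (S : Set E) (l : ℕ) : Prop :=
  ∃ c : Fin l → Set E, StrictAnti c ∧ ∀ i, IsFaceOf S (c i) ∧ (c i).Nonempty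

/-- `l` is the length of the longest chain of nonempty faces of `S`. -/
def IsLongestFaceChainLength {E : Type*} [AddCommGroup E] [Module ℝ E] (S : Set E) (l : ℕ) : Prop :=
  HasFaceChainOfLength S l ∧ ∀ m, HasFaceChainOfLength S m → m ≤ l

/-- The minimal face of `K` containing `x`: the intersection of all faces of `K`
containing `x`. -/
def minFace {E : Type*} [AddCommGroup E] [Module ℝ E] (K : Set E) (x : E) : Set E :=
  ⋂₀ {F : Set E | IsFaceOf K F ∧ x ∈ F}

set_option linter.unusedSectionVars false
set_option linter.unusedVariables false

section Basic
variable {E : Type*} [AddCommGroup E] [Module ℝ E] {K M M' F S : Set E} {x y z v r : E}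

lemma isFaceOf_refl (h : Convex ℝ K) : IsFaceOf K K :=
  ⟨le_refl _, h, fun _ hx _ hy _ _ _ _ => ⟨hx, hy⟩⟩

lemma IsFaceOf.trans (hKM : IsFaceOf K M) (hMF : IsFaceOf M F) : IsFaceOf K F := by
  refine ⟨hMF.1.trans hKM.1, hMF.2.1, ?_⟩
  intro x hx y hy a ha ha1 hmem
  have hM := hKM.2.2 hx hy ha ha1 (hMF.1 hmem)
  exact hMF.2.2 hM.1 hM.2 ha ha1 hmem

lemma IsFaceOf.ofSubset (hF : IsFaceOf K F) (hM : IsFaceOf K M) (hsub : F ⊆ M) :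
    IsFaceOf M F :=
  ⟨hsub, hF.2.1, fun _ hx _ hy _ ha ha1 hm => hF.2.2 (hM.1 hx) (hM.1 hy) ha ha1 hm⟩

lemma minFace_isFaceOf (hK : Convex ℝ K) (hx : x ∈ K) : IsFaceOf K (minFace K x) := by
  refine ⟨Set.sInter_subset_of_mem ⟨isFaceOf_refl hK, hx⟩,
    convex_sInter fun F hF => hF.1.2.1, ?_⟩
  intro u hu v hv a ha ha1 hmem
  constructor
  · intro G hG; exact (hG.1.2.2 hu hv ha ha1 (Set.mem_sInter.1 hmem G hG)).1
  · intro G hG; exact (hG.1.2.2 hu hv ha ha1 (Set.mem_sInter.1 hmem G hG)).2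

lemma mem_minFace_self : x ∈ minFace K x := fun _ hG => hG.2

lemma minFace_subset_face (hF : IsFaceOf K F) (hxF : x ∈ F) : minFace K x ⊆ F :=
  Set.sInter_subset_of_mem ⟨hF, hxF⟩

lemma minFace_eq_of_face (hK : Convex ℝ K) (hM' : IsFaceOf K M') (hx : x ∈ M') :
    minFace M' x = minFace K x := by
  apply subset_antisymm
  · have h1 : IsFaceOf M' (minFace K x) :=
      (minFace_isFaceOf hK (hM'.1 hx)).ofSubset hM' (minFace_subset_face hM' hx)
    exact minFace_subset_face h1 mem_minFace_self
  · apply Set.sInter_subset_sInter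
    intro G hG
    exact ⟨hM'.trans hG.1, hG.2⟩

lemma zero_mem_face (hcone : ∀ c : ℝ, 0 ≤ c → ∀ y ∈ K, c • y ∈ K)
    (hF : IsFaceOf K F) (hy : y ∈ F) : (0 : E) ∈ F := by
  have hyK := hF.1 hy
  have h2 : (2 : ℝ) • y ∈ K := hcone 2 (by norm_num) y hyK
  have h0 : (0 : E) ∈ K := by simpa using hcone 0 le_rfl y hyK
  have heq : y = (1 / 2 : ℝ) • ((2 : ℝ) • y) + (1 - 1 / 2 : ℝ) • (0 : E) := by
    rw [smul_smul]; norm_num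
  exact (hF.2.2 h2 h0 (by norm_num) (by norm_num) (heq ▸ hy)).2

lemma smul_mem_face (hcone : ∀ c : ℝ, 0 ≤ c → ∀ y ∈ K, c • y ∈ K)
    (hF : IsFaceOf K F) (hy : y ∈ F) {c : ℝ} (hc : 0 ≤ c) : c • y ∈ F := by
  have h0F : (0 : E) ∈ F := zero_mem_face hcone hF hy
  rcases le_or_gt c 1 with hc1 | hc1
  · have := hF.2.1 hy h0F hc (by linarith : (0:ℝ) ≤ 1 - c) (by ring)
    simpa using this
  · have hcK : c • y ∈ K := hcone c hc y (hF.1 hy)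
    have h0 : (0 : E) ∈ K := hF.1 h0F
    have heq : y = (1 / c : ℝ) • (c • y) + (1 - 1 / c : ℝ) • (0 : E) := by
      rw [smul_smul]; field_simp; simp
    exact (hF.2.2 hcK h0 (by positivity) (by rw [div_lt_one] <;> linarith) (heq ▸ hy)).1

lemma zero_isFaceOf (hcone : ∀ c : ℝ, 0 ≤ c → ∀ y ∈ K, c • y ∈ K)
    (hpointed : ∀ a ∈ K, -a ∈ K → a = 0) (h0 : (0 : E) ∈ K) :
    IsFaceOf K ({0} : Set E) := by
  refine ⟨by simpa using h0, convex_singleton 0, ?_⟩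
  intro u hu v hv a ha ha1 hm
  rw [Set.mem_singleton_iff] at hm
  have hau : a • u ∈ K := hcone a ha.le u hu
  have hav : (1 - a) • v ∈ K := hcone (1 - a) (by linarith) v hv
  have h1 : a • u = -((1 - a) • v) := by rw [eq_neg_iff_add_eq_zero]; exact hm
  have h2 : a • u = 0 := hpointed _ hau (by rw [h1, neg_neg]; exact hav)
  have hu0 : u = 0 := by
    have := smul_eq_zero.1 h2
    rcases this with h | h
    · exact absurd h (ne_of_gt ha)
    · exact h
  have h3 : (1 - a) • v = 0 := by rw [← neg_eq_zero, ← h1]; exact h2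
  have hv0 : v = 0 := by
    rcases smul_eq_zero.1 h3 with h | h
    · exact absurd h (by intro hh; linarith)
    · exact h
  simp [hu0, hv0]

lemma exposed_isFaceOf (hK : Convex ℝ K) (g : E →ₗ[ℝ] ℝ) (hg : ∀ m ∈ K, 0 ≤ g m) :
    IsFaceOf K (K ∩ {w | g w = 0}) := by
  refine ⟨Set.inter_subset_left, ?_, ?_⟩
  · intro u hu v hv a b ha hb hab
    exact ⟨hK hu.1 hv.1 ha hb hab, by
      simp only [Set.mem_setOf_eq, map_add, map_smul, smul_eq_mul]
      rw [hu.2.out, hv.2.out]; ring⟩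
  · intro u hu v hv a ha ha1 hm
    have hval : a * g u + (1 - a) * g v = 0 := by
      have := hm.2.out
      simpa [map_add, map_smul] using this
    have hgu : g u = 0 := by nlinarith [hg u hu, hg v hv]
    have hgv : g v = 0 := by nlinarith [hg u hu, hg v hv]
    exact ⟨⟨hu, hgu⟩, ⟨hv, hgv⟩⟩

end Basic

section Dim
variable {E : Type*} [NormedAddCommGroup E] [InnerProductSpace ℝ E] [FiniteDimensional ℝ E]
  {K M F S : Set E} {x y z v r : E}

lemma vectorSpan_eq_span (h0 : (0 : E) ∈ S) : vectorSpan ℝ S = Submodule.span ℝ S := by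
  apply le_antisymm
  · rw [vectorSpan_def, Submodule.span_le]
    rintro p ⟨a, ha, b, hb, rfl⟩
    exact sub_mem (Submodule.subset_span ha) (Submodule.subset_span hb)
  · rw [Submodule.span_le]
    intro s hs
    have := vsub_mem_vectorSpan ℝ hs h0
    simpa using this

lemma one_le_setDim (h0 : (0 : E) ∈ S) (hx : x ∈ S) (hxne : x ≠ 0) : 1 ≤ setDim S := by
  have hmem : x ∈ vectorSpan ℝ S := by
    rw [vectorSpan_eq_span h0]; exact Submodule.subset_span hx
  have : Nontrivial (vectorSpan ℝ S) :=
    ⟨⟨x, hmem⟩, 0, by simp [Subtype.ext_iff, hxne]⟩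
  exact Module.finrank_pos

lemma exists_ne_zero_of_setDim_pos (h : 1 ≤ setDim S) : ∃ r ∈ S, r ≠ (0 : E) := by
  by_contra hc
  push_neg at hc
  have hsub : S ⊆ ({0} : Set E) := fun s hs => hc s hs
  have : vectorSpan ℝ S ≤ vectorSpan ℝ ({0} : Set E) := vectorSpan_mono ℝ hsub
  rw [vectorSpan_singleton] at this
  have hbot : vectorSpan ℝ S = ⊥ := le_bot_iff.1 this
  rw [setDim, hbot, finrank_bot] at h
  omega

lemma setDim_exposed_lt (h0 : (0 : E) ∈ M) (g : E →ₗ[ℝ] ℝ) (hg : ∀ m ∈ M, 0 ≤ g m)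
    {m₀ : E} (hm₀ : m₀ ∈ M) (hgm₀ : 0 < g m₀) :
    setDim (M ∩ {w | g w = 0}) < setDim M := by
  have h0F : (0 : E) ∈ M ∩ {w | g w = 0} := ⟨h0, by simp⟩
  rw [setDim, setDim, vectorSpan_eq_span h0, vectorSpan_eq_span h0F]
  apply Submodule.finrank_lt_finrank_of_lt
  refine lt_of_le_of_ne (Submodule.span_mono Set.inter_subset_left) ?_
  intro heq
  have hker : Submodule.span ℝ (M ∩ {w | g w = 0}) ≤ LinearMap.ker g := by
    rw [Submodule.span_le]; intro w hw; exact hw.2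
  have : m₀ ∈ LinearMap.ker g := hker (heq ▸ Submodule.subset_span hm₀)
  rw [LinearMap.mem_ker] at this
  rw [this] at hgm₀
  exact lt_irrefl 0 hgm₀

end Dim

section Chain
variable {E : Type*} [AddCommGroup E] [Module ℝ E] {A B : Set E}

lemma chain_prepend {m : ℕ} (h : HasFaceChainOfLength A m) (hBA : IsFaceOf B A)
    (hne : A ≠ B) (hBconv : Convex ℝ B) (hBne : B.Nonempty) :
    HasFaceChainOfLength B (m + 1) := by
  obtain ⟨c, hanti, hc⟩ := h
  have hAB : A ⊂ B := HasSubset.Subset.ssubset_of_ne hBA.1 hne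
  have hsub : ∀ i, c i ⊂ B := fun i => lt_of_le_of_lt (hc i).1.1 hAB
  refine ⟨Fin.cons B c, ?_, ?_⟩
  · intro i j
    refine Fin.cases ?_ (fun i' => ?_) i <;> refine Fin.cases ?_ (fun j' => ?_) j <;> intro hij
    · exact absurd hij (lt_irrefl _)
    · exact hsub j'
    · exact absurd hij (by simp only [Fin.lt_def, Fin.val_succ, Fin.val_zero]; omega)
    · exact hanti (Fin.succ_lt_succ_iff.mp hij)
  · intro i
    refine Fin.cases ?_ (fun i' => ?_) i
    · exact ⟨isFaceOf_refl hBconv, hBne⟩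
    · exact ⟨hBA.trans (hc i').1, (hc i').2⟩

lemma chain_singleton_zero : HasFaceChainOfLength ({0} : Set E) 1 := by
  refine ⟨fun _ => ({0} : Set E), ?_, ?_⟩
  · intro i j hij
    exact absurd hij (by omega)
  · exact fun _ => ⟨isFaceOf_refl (convex_singleton 0), ⟨0, rfl⟩⟩

end Chain

section Analytic
variable {E : Type*} [NormedAddCommGroup E] [InnerProductSpace ℝ E] [FiniteDimensional ℝ E]
  {M : Set E} {x y z v r : E}

lemma reach_boundary (hclosed : IsClosed M)
    (hcone : ∀ c : ℝ, 0 ≤ c → ∀ y ∈ M, c • y ∈ M)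
    (hpointed : ∀ a ∈ M, -a ∈ M → a = 0)
    (hx : x ∈ M) (hr : r ∈ M) (hrne : r ≠ 0) :
    ∃ t : ℝ, 0 ≤ t ∧ x - t • r ∈ M ∧ ∀ ε : ℝ, 0 < ε → x - (t + ε) • r ∉ M := by
  set T : Set ℝ := {t : ℝ | 0 ≤ t ∧ x - t • r ∈ M} with hT
  have hT0 : (0 : ℝ) ∈ T := ⟨le_rfl, by simpa using hx⟩
  have hTclosed : IsClosed T := by
    apply IsClosed.inter
    · exact isClosed_le continuous_const continuous_id
    · exact hclosed.preimage (by continuity)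
  have hbdd : BddAbove T := by
    by_contra hb
    rw [not_bddAbove_iff] at hb
    have hsel : ∀ k : ℕ, ∃ t : ℝ, t ∈ T ∧ (k : ℝ) + 1 < t := by
      intro k
      obtain ⟨t, ht, hlt⟩ := hb ((k : ℝ) + 1)
      exact ⟨t, ht, hlt⟩
    choose t htT htgt using hsel
    have htpos : ∀ k, 0 < t k := fun k => lt_of_le_of_lt (by positivity : (0:ℝ) ≤ (k : ℝ) + 1) (htgt k)
    have hmem : ∀ k, (t k)⁻¹ • x - r ∈ M := by
      intro k
      have := hcone (t k)⁻¹ (inv_nonneg.2 (htpos k).le) _ (htT k).2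
      have heq : (t k)⁻¹ • (x - t k • r) = (t k)⁻¹ • x - r := by
        rw [smul_sub, smul_smul, inv_mul_cancel₀ (ne_of_gt (htpos k)), one_smul]
      rwa [heq] at this
    have htendsto : Filter.Tendsto (fun k => (t k)⁻¹ • x - r) Filter.atTop (nhds (0 - r)) := by
      apply Filter.Tendsto.sub_const
      have h1 : Filter.Tendsto t Filter.atTop Filter.atTop := by
        apply Filter.tendsto_atTop_mono (fun k => (htgt k).le)
        apply Filter.tendsto_atTop_add_const_right
        exact tendsto_natCast_atTop_atTop
      have h2 : Filter.Tendsto (fun k => (t k)⁻¹) Filter.atTop (nhds 0) :=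
        tendsto_inv_atTop_zero.comp h1
      simpa using h2.smul_const x
    have hnr : -r ∈ M := by
      have := hclosed.mem_of_tendsto htendsto (Filter.Eventually.of_forall hmem)
      simpa using this
    exact hrne (hpointed r hr hnr)
  have hstar : sSup T ∈ T := hTclosed.csSup_mem ⟨0, hT0⟩ hbdd
  refine ⟨sSup T, hstar.1, hstar.2, ?_⟩
  intro ε hε hmem
  have : sSup T + ε ∈ T := ⟨by linarith [hstar.1], hmem⟩
  have := le_csSup hbdd this
  linarith

lemma exists_support (hconv : Convex ℝ M) (hclosed : IsClosed M)
    (hcone : ∀ c : ℝ, 0 ≤ c → ∀ y ∈ M, c • y ∈ M)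
    (hz : z ∈ M) (hv : v ∈ M) (hsep : ∀ ε : ℝ, 0 < ε → z - ε • v ∉ M) :
    ∃ g : E →ₗ[ℝ] ℝ, (∀ m ∈ M, 0 ≤ g m) ∧ g z = 0 ∧ ∃ m ∈ M, 0 < g m := by
  have h0M : (0 : E) ∈ M := by simpa using hcone 0 le_rfl z hz
  set V := Submodule.span ℝ M with hV
  have hMV : M ⊆ (V : Set E) := Submodule.subset_span
  set M' : Set V := Subtype.val ⁻¹' M with hM'
  have hM'conv : Convex ℝ M' := by
    intro a ha b hb s u hs hu hsu
    show ((s • a + u • b : V) : E) ∈ M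
    push_cast
    exact hconv ha hb hs hu hsu
  have hM'closed : IsClosed M' := hclosed.preimage continuous_subtype_val
  have hspan : Submodule.span ℝ M' = (⊤ : Submodule ℝ V) := by
    apply Submodule.map_injective_of_injective V.injective_subtype
    rw [Submodule.map_span, Submodule.map_top, Submodule.range_subtype]
    have himg : Subtype.val '' M' = M := by
      rw [hM', Set.image_preimage_eq_inter_range, Subtype.range_coe]
      exact Set.inter_eq_self_of_subset_left hMV
    rw [Submodule.coe_subtype, himg]
  have h0M' : (0 : V) ∈ M' := by
    show ((0 : V) : E) ∈ M
    simpa using h0M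
  have haff : affineSpan ℝ M' = ⊤ := by
    rw [AffineSubspace.affineSpan_eq_top_iff_vectorSpan_eq_top_of_nonempty ℝ V V ⟨_, h0M'⟩]
    rw [vectorSpan_eq_span h0M']
    exact hspan
  have hint : (interior M').Nonempty :=
    hM'conv.interior_nonempty_iff_affineSpan_eq_top.mpr haff
  set zV : V := ⟨z, hMV hz⟩ with hzV
  set vV : V := ⟨v, hMV hv⟩ with hvV
  have hznotint : zV ∉ interior M' := by
    intro hzint
    have hten : Filter.Tendsto (fun ε : ℝ => zV - ε • vV) (nhdsWithin 0 (Set.Ioi 0))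
        (nhds zV) := by
      apply Filter.Tendsto.mono_left _ nhdsWithin_le_nhds
      have : Filter.Tendsto (fun ε : ℝ => zV - ε • vV) (nhds 0) (nhds (zV - (0 : ℝ) • vV)) := by
        apply Filter.Tendsto.sub tendsto_const_nhds
        exact Filter.Tendsto.smul_const Filter.tendsto_id vV
      simpa using this
    have hev : ∀ᶠ ε in nhdsWithin (0:ℝ) (Set.Ioi 0), zV - ε • vV ∈ interior M' :=
      hten.eventually_mem (isOpen_interior.mem_nhds hzint)
    obtain ⟨ε, hmem, hεpos⟩ := (hev.and self_mem_nhdsWithin).exists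
    have : z - ε • v ∈ M := by
      have h1 : ((zV - ε • vV : V) : E) = z - ε • v := by push_cast; rfl
      have := interior_subset hmem
      rwa [hM', Set.mem_preimage, h1] at this
    exact hsep ε hεpos this
  obtain ⟨f, hf⟩ := geometric_hahn_banach_open_point hM'conv.interior isOpen_interior hznotint
  have hle : ∀ m ∈ M', f m ≤ f zV := by
    intro m hm
    obtain ⟨a, ha⟩ := hint
    by_contra hgt
    push_neg at hgt
    set c := f zV - f a with hc
    set d := f m - f zV with hd
    have hcpos : 0 < c := sub_pos.2 (hf a ha)
    have hdpos : 0 < d := sub_pos.2 hgt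
    have hcd : 0 < c + d := by linarith
    set t : ℝ := (c + d / 2) / (c + d) with ht
    have ht0 : 0 ≤ t := by positivity
    have ht1 : t < 1 := by
      rw [div_lt_one hcd]; linarith
    have hmemint : t • m + (1 - t) • a ∈ interior M' :=
      hM'conv.combo_closure_interior_mem_interior (subset_closure hm) ha ht0
        (by linarith) (by ring)
    have hlt := hf _ hmemint
    rw [map_add, map_smul, map_smul] at hlt
    have hmul : t * (c + d) = c + d / 2 := div_mul_cancel₀ _ (ne_of_gt hcd)
    simp only [smul_eq_mul] at hlt
    nlinarith
  have hfz : f zV = 0 := by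
    have h2z : ((2 : ℝ) • zV : V) ∈ M' := by
      show ((2 : ℝ) • zV : V).val ∈ M
      push_cast
      exact hcone 2 (by norm_num) z hz
    have hle2 := hle _ h2z
    rw [map_smul] at hle2
    simp only [smul_eq_mul] at hle2
    have hle0 := hle _ h0M'
    rw [map_zero] at hle0
    linarith
  haveI : CompleteSpace V := FiniteDimensional.complete ℝ V
  set g : E →ₗ[ℝ] ℝ := -((f.toLinearMap).comp ((V.orthogonalProjectionOnto).toLinearMap)) with hg
  have hproj : ∀ (m : E) (hm : m ∈ M), V.orthogonalProjectionOnto m = (⟨m, hMV hm⟩ : V) := by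
    intro m hm
    apply Subtype.coe_injective
    exact Submodule.starProjection_eq_self_iff.mpr (hMV hm)
  have hgval : ∀ (m : E) (hm : m ∈ M), g m = -(f ⟨m, hMV hm⟩) := by
    intro m hm
    simp only [hg, LinearMap.neg_apply, LinearMap.comp_apply, ContinuousLinearMap.coe_coe]
    rw [hproj m hm]
  refine ⟨g, ?_, ?_, ?_⟩
  · intro m hm
    rw [hgval m hm]
    have := hle ⟨m, hMV hm⟩ hm
    rw [hfz] at this
    linarith
  · rw [hgval z hz]
    have : (⟨z, hMV hz⟩ : V) = zV := rfl
    rw [this, hfz, neg_zero]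
  · obtain ⟨a, ha⟩ := hint
    have haM : (a : E) ∈ M := (interior_subset ha : a ∈ M')
    refine ⟨a, haM, ?_⟩
    rw [hgval _ haM]
    have : (⟨(a : E), hMV haM⟩ : V) = a := rfl
    rw [this]
    have := hf a ha
    rw [hfz] at this
    linarith

end Analytic

section Main
variable {E : Type*} [NormedAddCommGroup E] [InnerProductSpace ℝ E] [FiniteDimensional ℝ E]

lemma sum_transfer {M M' : Set E} {k : ℕ} {x : E} (hM' : IsFaceOf M M')
    (h : IsSumOfExtremeRayElems M' k x) : IsSumOfExtremeRayElems M k x := by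
  obtain ⟨m, hm, f, hf, hsum⟩ := h
  refine ⟨m, hm, f, fun i => ?_, hsum⟩
  obtain ⟨R, hR, hfi⟩ := hf i
  exact ⟨R, ⟨hM'.trans hR.1, hR.2⟩, hfi⟩

/-- Exposed slice properties bundled. -/
lemma exposed_props {M : Set E} (hconv : Convex ℝ M) (hclosed : IsClosed M)
    (hcone : ∀ c : ℝ, 0 ≤ c → ∀ y ∈ M, c • y ∈ M)
    (hpointed : ∀ a ∈ M, -a ∈ M → a = 0) (g : E →ₗ[ℝ] ℝ) :
    Convex ℝ (M ∩ {w | g w = 0}) ∧ IsClosed (M ∩ {w | g w = 0}) ∧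
    (∀ c : ℝ, 0 ≤ c → ∀ y ∈ M ∩ {w | g w = 0}, c • y ∈ M ∩ {w | g w = 0}) ∧
    (∀ a ∈ M ∩ {w | g w = 0}, -a ∈ M ∩ {w | g w = 0} → a = 0) := by
  refine ⟨?_, ?_, ?_, ?_⟩
  · intro u hu v hv a b ha hb hab
    refine ⟨hconv hu.1 hv.1 ha hb hab, ?_⟩
    simp only [Set.mem_setOf_eq, map_add, map_smul, smul_eq_mul]
    rw [hu.2.out, hv.2.out]; ring
  · exact hclosed.inter ((isClosed_singleton (x := (0:ℝ))).preimage g.continuous_of_finiteDimensional)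
  · intro c hc y hy
    exact ⟨hcone c hc y hy.1, by simp [map_smul, hy.2.out]⟩
  · intro a ha hna
    exact hpointed a ha.1 hna.1

lemma exists_extremeRay : ∀ (d : ℕ) (M : Set E), setDim M = d →
    Convex ℝ M → IsClosed M → (∀ c : ℝ, 0 ≤ c → ∀ y ∈ M, c • y ∈ M) →
    (∀ a ∈ M, -a ∈ M → a = 0) → 1 ≤ d → ∃ R : Set E, IsExtremeRay M R := by
  intro d
  induction d using Nat.strong_induction_on with
  | _ d IH =>
    intro M hd hconv hclosed hcone hpointed h1
    rcases eq_or_lt_of_le h1 with heq | hlt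
    · exact ⟨M, isFaceOf_refl hconv, by omega⟩
    · -- 2 ≤ d
      obtain ⟨u, huM, hune⟩ := exists_ne_zero_of_setDim_pos (S := M) (by omega)
      have h0M : (0 : E) ∈ M := by simpa using hcone 0 le_rfl u huM
      obtain ⟨v, hvM, hvnot⟩ : ∃ v ∈ M, v ∉ Submodule.span ℝ ({u} : Set E) := by
        by_contra hc
        push_neg at hc
        have hle : Submodule.span ℝ M ≤ Submodule.span ℝ ({u} : Set E) :=
          Submodule.span_le.2 hc
        have h1' : setDim M ≤ 1 := by
          rw [setDim, vectorSpan_eq_span h0M]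
          calc Module.finrank ℝ (Submodule.span ℝ M)
              ≤ Module.finrank ℝ (Submodule.span ℝ ({u} : Set E)) := Submodule.finrank_mono hle
            _ = 1 := finrank_span_singleton hune
        omega
      obtain ⟨t, ht0, hzM, htnot⟩ := reach_boundary hclosed hcone hpointed hvM huM hune
      set z := v - t • u with hz
      have hzsep : ∀ ε : ℝ, 0 < ε → z - ε • u ∉ M := by
        intro ε hε hmem
        apply htnot ε hε
        have : v - (t + ε) • u = z - ε • u := by rw [hz]; module
        rwa [this]
      have hzne : z ≠ 0 := by
        intro h
        apply hvnot
        have : v = t • u := by rw [hz] at h; rwa [sub_eq_zero] at h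
        rw [this]
        exact Submodule.mem_span_singleton.2 ⟨t, rfl⟩
      obtain ⟨g, hg0, hgz, m₀, hm₀M, hgm₀⟩ := exists_support hconv hclosed hcone hzM huM hzsep
      set F := M ∩ {w | g w = 0} with hF
      have hFface : IsFaceOf M F := exposed_isFaceOf hconv g hg0
      obtain ⟨hFconv, hFclosed, hFcone, hFpointed⟩ := exposed_props hconv hclosed hcone hpointed g
      have hzF : z ∈ F := ⟨hzM, hgz⟩
      have h0F : (0 : E) ∈ F := ⟨h0M, map_zero g⟩
      have hdimF1 : 1 ≤ setDim F := one_le_setDim h0F hzF hzne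
      have hdimFlt : setDim F < d := hd ▸ setDim_exposed_lt h0M g hg0 hm₀M hgm₀
      obtain ⟨R, hR⟩ := IH (setDim F) hdimFlt F rfl hFconv hFclosed hFcone hFpointed hdimF1
      exact ⟨R, hFface.trans hR.1, hR.2⟩

end Main

section Main2
variable {E : Type*} [NormedAddCommGroup E] [InnerProductSpace ℝ E] [FiniteDimensional ℝ E]

lemma thmA : ∀ (d : ℕ) (M : Set E), setDim M = d →
    Convex ℝ M → IsClosed M → (∀ c : ℝ, 0 ≤ c → ∀ y ∈ M, c • y ∈ M) →
    (∀ a ∈ M, -a ∈ M → a = 0) → ∀ x ∈ M, ∀ l : ℕ,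
    (∀ m, HasFaceChainOfLength (minFace M x) m → m ≤ l) →
    IsSumOfExtremeRayElems M (l - 1) x := by
  intro d
  induction d using Nat.strong_induction_on with
  | _ d IH =>
    intro M hd hconv hclosed hcone hpointed x hx l hbound
    by_cases hx0 : x = 0
    · exact ⟨0, Nat.zero_le _, fun _ => 0, fun i => i.elim0, by simp [hx0]⟩
    have h0M : (0 : E) ∈ M := by simpa using hcone 0 le_rfl x hx
    have hMface : IsFaceOf M (minFace M x) := minFace_isFaceOf hconv hx
    have hxmin : x ∈ minFace M x := mem_minFace_self
    have h0min : (0 : E) ∈ minFace M x := zero_mem_face hcone hMface hxmin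
    have hminne : minFace M x ≠ ({0} : Set E) := by
      intro h
      rw [h] at hxmin
      exact hx0 hxmin
    have hl2 : 2 ≤ l := by
      apply hbound 2
      have h0face : IsFaceOf (minFace M x) ({0} : Set E) :=
        (zero_isFaceOf hcone hpointed h0M).ofSubset hMface (by simpa using h0min)
      exact chain_prepend chain_singleton_zero h0face (Ne.symm hminne) hMface.2.1 ⟨x, hxmin⟩
    by_cases hg : ∃ g : E →ₗ[ℝ] ℝ, (∀ m ∈ M, 0 ≤ g m) ∧ g x = 0 ∧ ∃ m ∈ M, 0 < g m
    · obtain ⟨g, hg0, hgx, m₀, hm₀M, hgm₀⟩ := hg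
      set M' := M ∩ {w | g w = 0} with hM'
      have hM'face : IsFaceOf M M' := exposed_isFaceOf hconv g hg0
      obtain ⟨hM'conv, hM'closed, hM'cone, hM'pointed⟩ :=
        exposed_props hconv hclosed hcone hpointed g
      have hxM' : x ∈ M' := ⟨hx, hgx⟩
      have hdim' : setDim M' < d := hd ▸ setDim_exposed_lt h0M g hg0 hm₀M hgm₀
      have hmineq : minFace M' x = minFace M x := minFace_eq_of_face hconv hM'face hxM'
      have hrec := IH (setDim M') hdim' M' rfl hM'conv hM'closed hM'cone hM'pointed x hxM' l
        (by rw [hmineq]; exact hbound)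
      exact sum_transfer hM'face hrec
    · have hd1 : 1 ≤ setDim M := one_le_setDim h0M hx hx0
      by_cases hdim1 : setDim M = 1
      · refine ⟨1, by omega, fun _ => x, fun _ => ⟨M, ⟨isFaceOf_refl hconv, hdim1⟩, hx⟩, by simp⟩
      · -- setDim M ≥ 2
        obtain ⟨R, hRface, hRdim⟩ :=
          exists_extremeRay (setDim M) M rfl hconv hclosed hcone hpointed hd1
        obtain ⟨r, hrR, hrne⟩ := exists_ne_zero_of_setDim_pos (S := R) (by omega)
        have hrM : r ∈ M := hRface.1 hrR
        obtain ⟨t, ht0, hyM, hynot⟩ := reach_boundary hclosed hcone hpointed hx hrM hrne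
        set y := x - t • r with hy
        have hysep : ∀ ε : ℝ, 0 < ε → y - ε • r ∉ M := by
          intro ε hε hmem
          apply hynot ε hε
          have : x - (t + ε) • r = y - ε • r := by rw [hy]; module
          rwa [this]
        obtain ⟨g, hg0, hgy, m₀, hm₀M, hgm₀⟩ := exists_support hconv hclosed hcone hyM hrM hysep
        set M' := M ∩ {w | g w = 0} with hM'
        have hM'face : IsFaceOf M M' := exposed_isFaceOf hconv g hg0
        obtain ⟨hM'conv, hM'closed, hM'cone, hM'pointed⟩ :=
          exposed_props hconv hclosed hcone hpointed g
        have hyM' : y ∈ M' := ⟨hyM, hgy⟩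
        have hxnot : x ∉ M' := fun hxM' => hg ⟨g, hg0, hxM'.2, m₀, hm₀M, hgm₀⟩
        have hymin : y ∈ minFace M x := by
          have h2t : ((2 * t) : ℝ) • r ∈ M := hcone _ (by positivity) r hrM
          have h2y : (2 : ℝ) • y ∈ M := hcone 2 (by norm_num) y hyM
          have hxeq : x = (1 / 2 : ℝ) • (((2 * t) : ℝ) • r) + (1 - 1 / 2 : ℝ) • ((2 : ℝ) • y) := by
            rw [hy]; module
          have hxin : (1 / 2 : ℝ) • (((2 * t) : ℝ) • r) + (1 - 1 / 2 : ℝ) • ((2 : ℝ) • y) ∈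
              minFace M x := by rw [← hxeq]; exact hxmin
          have hsplit := hMface.2.2 h2t h2y (show (0:ℝ) < 1/2 by norm_num) (by norm_num) hxin
          have := smul_mem_face hcone hMface hsplit.2 (c := (1/2 : ℝ)) (by norm_num)
          rwa [smul_smul, show (1/2 : ℝ) * 2 = 1 by norm_num, one_smul] at this
        have hminface' : minFace M' y = minFace M y := minFace_eq_of_face hconv hM'face hyM'
        have hyminface : IsFaceOf M (minFace M y) := minFace_isFaceOf hconv hyM
        have hsubmin : minFace M y ⊆ minFace M x := minFace_subset_face hMface hymin
        have hminne' : minFace M y ≠ minFace M x := by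
          intro h
          apply hxnot
          exact minFace_subset_face hM'face hyM' (h ▸ hxmin)
        have hbound' : ∀ m, HasFaceChainOfLength (minFace M' y) m → m ≤ l - 1 := by
          intro m hm
          rw [hminface'] at hm
          have hchain : HasFaceChainOfLength (minFace M x) (m + 1) :=
            chain_prepend hm (hyminface.ofSubset hMface hsubmin) hminne'
              hMface.2.1 ⟨x, hxmin⟩
          have := hbound (m + 1) hchain
          omega
        have hdim' : setDim M' < d := hd ▸ setDim_exposed_lt h0M g hg0 hm₀M hgm₀
        have hrec := IH (setDim M') hdim' M' rfl hM'conv hM'closed hM'cone hM'pointed y hyM'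
          (l - 1) hbound'
        obtain ⟨m', hm'le, f, hf, hfsum⟩ := sum_transfer hM'face hrec
        refine ⟨m' + 1, by omega, Fin.cons (t • r) f, ?_, ?_⟩
        · intro i
          refine Fin.cases ?_ (fun j => ?_) i
          · exact ⟨R, ⟨hRface, hRdim⟩, by
              simpa using smul_mem_face hcone hRface hrR ht0⟩
          · simpa using hf j
        · rw [Fin.sum_cons, ← hfsum, hy]
          module

end Main2


/-- For a pointed closed convex cone `K` and `x ∈ K`, `x` is a sum of at most
`ℓ − 1` elements of extreme rays of `K`, where `ℓ` is the length of the longest chain of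
nonempty faces of the minimal face of `K` containing `x`. -/
theorem caratheodory_stmt6 {n : ℕ} (K : Set (EuclideanSpace ℝ (Fin n)))
    (hconv : Convex ℝ K)
    (hcone : ∀ (c : ℝ), 0 ≤ c → ∀ y ∈ K, c • y ∈ K)
    (hclosed : IsClosed K)
    (hpointed : K ∩ (-K) = {0})
    (x : EuclideanSpace ℝ (Fin n)) (hx : x ∈ K)
    (l : ℕ) (hl : IsLongestFaceChainLength (minFace K x) l) :
    IsSumOfExtremeRayElems K (l - 1) x := by
  have hpointed' : ∀ a ∈ K, -a ∈ K → a = 0 := by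
    intro a ha hna
    have hmem : a ∈ K ∩ (-K) := ⟨ha, Set.mem_neg.mpr (by simpa using hna)⟩
    rw [hpointed] at hmem
    exact hmem
  exact thmA (setDim K) K rfl hconv hclosed hcone hpointed' x hx l hl.2
end

section
/- Let C ⊆ ℝⁿ be a nonempty compact convex set and K = {(α, αx) : α ≥ 0, x ∈ C}. If F is a face of K with F ≠ {0}, then F_C = {x ∈ C : (1,x) ∈ F} is a face of C, and dim F_C = dim F − 1. -/
lemma vectorSpan_eq_span_of_zero_mem' {E : Type*} [AddCommGroup E] [Module ℝ E]
    (S : Set E) (h0 : (0:E) ∈ S) : vectorSpan ℝ S = Submodule.span ℝ S := by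
  apply le_antisymm
  · rw [vectorSpan]
    apply Submodule.span_le.mpr
    rintro v ⟨a, ha, b, hb, rfl⟩
    exact sub_mem (Submodule.subset_span ha) (Submodule.subset_span hb)
  · apply Submodule.span_le.mpr
    intro s hs
    have : s -ᵥ (0:E) ∈ S -ᵥ S := Set.vsub_mem_vsub hs h0
    simpa [vectorSpan] using Submodule.subset_span this

lemma span_lift_finrank' {E : Type*} [AddCommGroup E] [Module ℝ E] [FiniteDimensional ℝ E]
    (D : Set E) (x0 : E) (hx0 : x0 ∈ D) :
    Module.finrank ℝ (Submodule.span ℝ ((fun x => ((1:ℝ), x)) '' D)) =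
      Module.finrank ℝ (vectorSpan ℝ D) + 1 := by
  set G : Set (ℝ × E) := (fun x => ((1:ℝ), x)) '' D with hG
  set V := vectorSpan ℝ D with hV
  set W : Submodule ℝ (ℝ × E) := Submodule.map (LinearMap.inr ℝ ℝ E) V with hW
  have hspan : Submodule.span ℝ G = (ℝ ∙ ((1:ℝ), x0)) ⊔ W := by
    apply le_antisymm
    · apply Submodule.span_le.mpr
      rintro _ ⟨x, hx, rfl⟩
      have h1 : ((1:ℝ), x0) ∈ (ℝ ∙ ((1:ℝ), x0)) := Submodule.mem_span_singleton_self _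
      have h2 : ((0:ℝ), x - x0) ∈ W :=
        ⟨x - x0, vsub_mem_vectorSpan ℝ hx hx0, rfl⟩
      have := Submodule.add_mem_sup h1 h2
      simpa using this
    · apply sup_le
      · exact (Submodule.span_singleton_le_iff_mem _ _).mpr
          (Submodule.subset_span ⟨x0, hx0, rfl⟩)
      · rw [hW, hV, vectorSpan, Submodule.map_span]
        apply Submodule.span_le.mpr
        rintro _ ⟨_, ⟨a, ha, b, hb, rfl⟩, rfl⟩
        have h1 : ((1:ℝ), a) ∈ Submodule.span ℝ G := Submodule.subset_span ⟨a, ha, rfl⟩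
        have h2 : ((1:ℝ), b) ∈ Submodule.span ℝ G := Submodule.subset_span ⟨b, hb, rfl⟩
        have := sub_mem h1 h2
        simpa [Prod.ext_iff, vsub_eq_sub] using this
  have hdisj : (ℝ ∙ ((1:ℝ), x0)) ⊓ W = ⊥ := by
    rw [eq_bot_iff]
    rintro p ⟨hp1, hp2⟩
    obtain ⟨c, rfl⟩ := Submodule.mem_span_singleton.mp hp1
    obtain ⟨v, hv, hveq⟩ := hp2
    have : c = 0 := by
      have := congrArg Prod.fst hveq
      simpa using this.symm
    simp [this]
  have hWrank : Module.finrank ℝ W = Module.finrank ℝ V :=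
    (Submodule.equivMapOfInjective _ LinearMap.inr_injective V).finrank_eq.symm
  have hkey := Submodule.finrank_sup_add_finrank_inf_eq (ℝ ∙ ((1:ℝ), x0)) W
  rw [hdisj, finrank_bot, add_zero, hWrank,
    finrank_span_singleton (by simp [Prod.ext_iff] : ((1:ℝ), x0) ≠ 0)] at hkey
  rw [hspan, hkey, add_comm]

/-- Let `C` be a nonempty compact convex set and
`K = {(α, α x) : α ≥ 0, x ∈ C}`. If `F` is a face of `K` with `F ≠ {0}`, then
`F_C = {x ∈ C : (1, x) ∈ F}` is a face of `C` with `dim F_C = dim F − 1`. -/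
theorem caratheodory_stmt9 {n : ℕ} (C : Set (EuclideanSpace ℝ (Fin n)))
    (hCne : C.Nonempty) (hCcompact : IsCompact C) (hCconv : Convex ℝ C)
    (K : Set (ℝ × EuclideanSpace ℝ (Fin n)))
    (hK : K = {p | ∃ α : ℝ, 0 ≤ α ∧ ∃ x ∈ C, p = (α, α • x)})
    (F : Set (ℝ × EuclideanSpace ℝ (Fin n)))
    (hF : IsFaceOf K F) (hF0 : F ≠ {0}) :
    IsFaceOf C {x ∈ C | (1, x) ∈ F} ∧ setDim {x ∈ C | (1, x) ∈ F} = setDim F - 1 := by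
  obtain ⟨hFK, hFconv, hFface⟩ := hF
  obtain ⟨c0, hc0⟩ := hCne
  by_cases hFe : F = ∅
  · subst hFe
    have hD : {x ∈ C | ((1:ℝ), x) ∈ (∅ : Set (ℝ × EuclideanSpace ℝ (Fin n)))} = ∅ := by
      ext x; simp
    rw [hD]
    refine ⟨⟨Set.empty_subset _, convex_empty, ?_⟩, ?_⟩
    · intro x _ y _ a _ _ h; exact absurd h (Set.notMem_empty _)
    · unfold setDim
      rw [show vectorSpan ℝ (∅ : Set (EuclideanSpace ℝ (Fin n))) = ⊥ from vectorSpan_empty ℝ _,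
        show vectorSpan ℝ (∅ : Set (ℝ × EuclideanSpace ℝ (Fin n))) = ⊥ from vectorSpan_empty ℝ _]
      simp
  have hFne : F.Nonempty := Set.nonempty_iff_ne_empty.mpr hFe
  have hKzero : (0 : ℝ × EuclideanSpace ℝ (Fin n)) ∈ K := by
    rw [hK]; exact ⟨0, le_refl 0, c0, hc0, by simp [Prod.ext_iff]⟩
  have hKsmul : ∀ p ∈ K, ∀ t : ℝ, 0 ≤ t → t • p ∈ K := by
    simp only [hK, Set.mem_setOf_eq]
    rintro p ⟨α, hα, x, hx, rfl⟩ t ht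
    exact ⟨t * α, mul_nonneg ht hα, x, hx, by simp [Prod.ext_iff, mul_smul]⟩
  have key : ∀ p ∈ F, (0 : ℝ × EuclideanSpace ℝ (Fin n)) ∈ F ∧ (2:ℝ) • p ∈ F := by
    intro p hp
    by_cases hp0 : p = 0
    · subst hp0; exact ⟨hp, by simpa using hp⟩
    · have h2p : (2:ℝ) • p ∈ K := hKsmul p (hFK hp) 2 (by norm_num)
      have := hFface h2p hKzero (a := 1/2) (by norm_num) (by norm_num)
        (by norm_num [smul_smul]; exact hp)
      exact ⟨this.2, this.1⟩
  obtain ⟨q, hqF⟩ := hFne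
  have h0F : (0 : ℝ × EuclideanSpace ℝ (Fin n)) ∈ F := (key q hqF).1
  have hpow : ∀ p ∈ F, ∀ k : ℕ, ((2:ℝ)^k) • p ∈ F := by
    intro p hp k
    induction k with
    | zero => simpa using hp
    | succ k ih =>
      have := (key _ ih).2
      rw [pow_succ, mul_comm, mul_smul]
      exact this
  have hcone : ∀ p ∈ F, ∀ t : ℝ, 0 ≤ t → t • p ∈ F := by
    intro p hp t ht
    obtain ⟨k, hk⟩ := pow_unbounded_of_one_lt t (by norm_num : (1:ℝ) < 2)
    have h2k : (0:ℝ) < 2 ^ k := by positivity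
    have ha : 0 ≤ t / 2 ^ k := by positivity
    have hb : 0 ≤ 1 - t / 2 ^ k := by
      rw [sub_nonneg, div_le_one h2k]; exact hk.le
    have := hFconv (hpow p hp k) h0F ha hb (by ring)
    simpa [smul_smul, div_mul_cancel₀ t h2k.ne'] using this
  -- characterization of F
  have hmemF : ∀ p ∈ F, p = 0 ∨ ∃ α : ℝ, 0 < α ∧ ∃ x, (x ∈ C ∧ ((1:ℝ), x) ∈ F) ∧
      p = (α, α • x) := by
    intro p hp
    have hpK := hFK hp
    rw [hK] at hpK
    obtain ⟨α, hα, x, hx, rfl⟩ := hpK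
    rcases eq_or_lt_of_le hα with h | h
    · left; simp [← h]
    · right
      refine ⟨α, h, x, ⟨hx, ?_⟩, rfl⟩
      have := hcone _ hp α⁻¹ (by positivity)
      simpa [Prod.smul_mk, smul_smul, inv_mul_cancel₀ h.ne'] using this
  have hDmemF : ∀ x, ((1:ℝ), x) ∈ F → ∀ α : ℝ, 0 ≤ α → ((α:ℝ), α • x) ∈ F := by
    intro x hx α hα
    simpa [Prod.smul_mk] using hcone _ hx α hα
  -- F_C nonempty
  obtain ⟨p, hpF, hp0⟩ : ∃ p ∈ F, p ≠ 0 := by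
    by_contra h
    push_neg at h
    exact hF0 (Set.eq_singleton_iff_unique_mem.mpr ⟨h0F, h⟩)
  obtain ⟨α, hα, x0, ⟨hx0C, hx0F⟩, rfl⟩ := (hmemF p hpF).resolve_left hp0
  -- face property
  have hface : IsFaceOf C {x ∈ C | ((1:ℝ), x) ∈ F} := by
    refine ⟨fun x hx => hx.1, ?_, ?_⟩
    · intro x hx y hy a b ha hb hab
      refine ⟨hCconv hx.1 hy.1 ha hb hab, ?_⟩
      have := hFconv hx.2 hy.2 ha hb hab
      have heq : a • ((1:ℝ), x) + b • ((1:ℝ), y) = ((1:ℝ), a • x + b • y) := by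
        simp [Prod.smul_mk, Prod.mk_add_mk, Prod.ext_iff, hab]
      rwa [heq] at this
    · intro x hx y hy a ha ha1 hmem
      have hxK : ((1:ℝ), x) ∈ K := by rw [hK]; exact ⟨1, zero_le_one, x, hx, by simp⟩
      have hyK : ((1:ℝ), y) ∈ K := by rw [hK]; exact ⟨1, zero_le_one, y, hy, by simp⟩
      have heq : a • ((1:ℝ), x) + (1 - a) • ((1:ℝ), y) = ((1:ℝ), a • x + (1-a) • y) := by
        simp [Prod.smul_mk, Prod.mk_add_mk, Prod.ext_iff]
      have := hFface hxK hyK ha ha1 (by rw [heq]; exact hmem.2)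
      exact ⟨⟨hx, this.1⟩, ⟨hy, this.2⟩⟩
  refine ⟨hface, ?_⟩
  -- dimension
  have hFspan : Submodule.span ℝ F =
      Submodule.span ℝ ((fun x => ((1:ℝ), x)) '' {x ∈ C | ((1:ℝ), x) ∈ F}) := by
    apply le_antisymm
    · apply Submodule.span_le.mpr
      intro p hp
      rcases hmemF p hp with rfl | ⟨β, hβ, y, hy, rfl⟩
      · exact Submodule.zero_mem _
      · have h1 : ((1:ℝ), y) ∈ Submodule.span ℝ ((fun x => ((1:ℝ), x)) ''
            {x ∈ C | ((1:ℝ), x) ∈ F}) := Submodule.subset_span ⟨y, hy, rfl⟩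
        have := Submodule.smul_mem _ β h1
        simpa [Prod.smul_mk] using this
    · apply Submodule.span_le.mpr
      rintro _ ⟨y, hy, rfl⟩
      exact Submodule.subset_span hy.2
  have h1 : setDim F = setDim {x ∈ C | ((1:ℝ), x) ∈ F} + 1 := by
    unfold setDim
    rw [vectorSpan_eq_span_of_zero_mem' F h0F, hFspan]
    exact span_lift_finrank' _ x0 ⟨hx0C, hx0F⟩
  omega
end
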